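/- Suppose every g-module contained in C is finite dimensional and C^du is the category of full duals (V^du = V* for every object V). Then: (a) the multiplication map of M admits a comorphism, and F[M] becomes a bialgebra with comultiplication the comorphism of the multiplication map and counit the evaluation at the unit of M; (b) the map sending each m ∈ M to its evaluation homomorphism is a bijection from M onto Specm F[M], the set of F-algebra homomorphisms F[M] → F; (c) the map sending each x ∈ Lie(M) to the derivation δ_x is a linear bijection from Lie(M) onto Der_1(F[M]), the space of point derivations of F[M] at 1 ∈ M. -/

import Mathlib

open TensorProduct

universe u v w

attribute [local instance 100] LieRing.ofAssociativeRing

/-- The data of a (full sub)category `C` of `g`-modules together with a category of duals: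
an index type `ι`, for each index a `g`-module `V i`, and a chosen point-separating
subspace `du i` of the full linear dual of `V i`. -/
structure TannakaSetting (F : Type u) [Field F] (g : Type v) [LieRing g] [LieAlgebra F g] where
  ι : Type w
  V : ι → Type w
  [iAdd : ∀ i, AddCommGroup (V i)]
  [iMod : ∀ i, Module F (V i)]
  ρ : ∀ i, g →ₗ⁅F⁆ Module.End F (V i)
  du : ∀ i, Submodule F (Module.Dual F (V i))

attribute [instance] TannakaSetting.iAdd TannakaSetting.iMod

namespace TannakaSetting

variable {F : Type u} [Field F] {g : Type v} [LieRing g] [LieAlgebra F g]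
variable (D : TannakaSetting F g)

/-- `g`-equivariant linear maps between objects of the category. -/
def IsHom {i j : D.ι} (f : D.V i →ₗ[F] D.V j) : Prop :=
  ∀ x : g, f ∘ₗ (D.ρ i x : Module.End F (D.V i)) = (D.ρ j x : Module.End F (D.V j)) ∘ₗ f

/-- An endomorphism of `V i` lies in `End_{V^du}(V)`, i.e. its transpose preserves
the chosen dual subspace. -/
def PreservesDu (i : D.ι) (f : Module.End F (D.V i)) : Prop :=
  ∀ φ ∈ D.du i, f.dualMap φ ∈ D.du i

/-- The action of `x ∈ g` on a tensor product of two objects. -/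
noncomputable def tensorρ (i j : D.ι) (x : g) : Module.End F (D.V i ⊗[F] D.V j) :=
  TensorProduct.map (D.ρ i x) LinearMap.id + TensorProduct.map LinearMap.id (D.ρ j x)

/-- `e` realizes `V k` as a tensor product of the `g`-modules `V i` and `V j`. -/
def IsTensorProd (i j k : D.ι) (e : D.V k ≃ₗ[F] (D.V i ⊗[F] D.V j)) : Prop :=
  ∀ x : g, e.toLinearMap ∘ₗ (D.ρ k x : Module.End F (D.V k)) = D.tensorρ i j x ∘ₗ e.toLinearMap

/-- `e` realizes `V k` as a direct sum of the `g`-modules `V i` and `V j`. -/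
def IsSumProd (i j k : D.ι) (e : D.V k ≃ₗ[F] (D.V i × D.V j)) : Prop :=
  ∀ x : g, e.toLinearMap ∘ₗ (D.ρ k x : Module.End F (D.V k)) =
    ((D.ρ i x : Module.End F (D.V i)).prodMap (D.ρ j x : Module.End F (D.V j))) ∘ₗ e.toLinearMap

/-- `V i` is a one-dimensional trivial `g`-module. -/
def IsTrivOneDim (i : D.ι) : Prop :=
  Module.finrank F (D.V i) = 1 ∧ ∀ x : g, (D.ρ i x : Module.End F (D.V i)) = 0

/-- The functional `φ ⊗ ψ` on a tensor product. -/
noncomputable def tensorDual {i j : D.ι} (φ : Module.Dual F (D.V i))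
    (ψ : Module.Dual F (D.V j)) : Module.Dual F (D.V i ⊗[F] D.V j) :=
  TensorProduct.dualDistrib F (D.V i) (D.V j) (φ ⊗ₜ[F] ψ)

/-- The axioms on the pair of categories `C`, `C^du`:
`C` is closed under isomorphism, (binary) direct sums, tensor products, submodules,
contains a one-dimensional trivial module, `g` acts faithfully, and the duals separate points,
are stable under the transposed `g`-action and under transposes of morphisms, and are compatible
with direct sums and tensor products. -/
structure IsGoodSetting : Prop where
  separating : ∀ (i : D.ι) (v : D.V i), v ≠ 0 → ∃ φ ∈ D.du i, φ v ≠ 0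
  du_g : ∀ (i : D.ι) (x : g), D.PreservesDu i (D.ρ i x)
  du_hom : ∀ (i j : D.ι) (f : D.V i →ₗ[F] D.V j), D.IsHom f →
    ∀ ψ ∈ D.du j, f.dualMap ψ ∈ D.du i
  faithful : ∀ x : g, (∀ i, (D.ρ i x : Module.End F (D.V i)) = 0) → x = 0
  exists_triv : ∃ i, D.IsTrivOneDim i
  exists_sum : ∀ i j : D.ι, ∃ (k : D.ι) (e : D.V k ≃ₗ[F] (D.V i × D.V j)), D.IsSumProd i j k e
  exists_tensor : ∀ i j : D.ι,
    ∃ (k : D.ι) (e : D.V k ≃ₗ[F] (D.V i ⊗[F] D.V j)), D.IsTensorProd i j k e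
  du_tensor : ∀ (i j k : D.ι) (e : D.V k ≃ₗ[F] (D.V i ⊗[F] D.V j)), D.IsTensorProd i j k e →
    ∀ φ ∈ D.du i, ∀ ψ ∈ D.du j, e.toLinearMap.dualMap (D.tensorDual φ ψ) ∈ D.du k
  du_sum : ∀ (i j k : D.ι) (e : D.V k ≃ₗ[F] (D.V i × D.V j)), D.IsSumProd i j k e →
    ∀ ξ : Module.Dual F (D.V k), ξ ∈ D.du k ↔
      ∃ φ ∈ D.du i, ∃ ψ ∈ D.du j,
        ξ = e.toLinearMap.dualMap
          ((LinearMap.fst F (D.V i) (D.V j)).dualMap φ +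
            (LinearMap.snd F (D.V i) (D.V j)).dualMap ψ)
  submod_closed : ∀ (i : D.ι) (U : Submodule F (D.V i)), (∀ x : g, ∀ u ∈ U, D.ρ i x u ∈ U) →
    ∃ (k : D.ι) (e : D.V k ≃ₗ[F] ↥U), ∀ (x : g) (v : D.V k),
      (↑(e ((D.ρ k x) v)) : D.V i) = D.ρ i x ↑(e v)
  isoClosed : ∀ (W : Type w) [AddCommGroup W] [Module F W] (ρW : g →ₗ⁅F⁆ Module.End F W)
    (i : D.ι) (e : D.V i ≃ₗ[F] W), (∀ (x : g) (v : D.V i), e (D.ρ i x v) = ρW x (e v)) →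
    ∃ (k : D.ι) (e' : D.V k ≃ₗ[F] W), ∀ (x : g) (v : D.V k), e' (D.ρ k x v) = ρW x (e' v)

/-- The algebra `Nat` of natural transformations: families of endomorphisms
`m i ∈ End_{V^du}(V i)` commuting with all `g`-equivariant maps between objects. -/
def NatAlg : Set (∀ i, Module.End F (D.V i)) :=
  { m | (∀ i, D.PreservesDu i (m i)) ∧
        ∀ (i j : D.ι) (f : D.V i →ₗ[F] D.V j), D.IsHom f → f ∘ₗ m i = m j ∘ₗ f }

/-- The Tannaka monoid `M`: natural transformations compatible with tensor products and
acting as the identity on trivial one-dimensional modules. -/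
def M : Set (∀ i, Module.End F (D.V i)) :=
  { m | m ∈ D.NatAlg ∧
        (∀ (i j k : D.ι) (e : D.V k ≃ₗ[F] (D.V i ⊗[F] D.V j)), D.IsTensorProd i j k e →
          e.toLinearMap ∘ₗ m k = TensorProduct.map (m i) (m j) ∘ₗ e.toLinearMap) ∧
        (∀ i, D.IsTrivOneDim i → m i = 1) }

/-- The matrix coefficient `f_{φ v}` as a function on the Tannaka monoid `M`. -/
def matCoef (i : D.ι) (φ : Module.Dual F (D.V i)) (v : D.V i) : ↥D.M → F :=
  fun m => φ (m.1 i v)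

/-- The coordinate ring `F[M]` of matrix coefficients (a set of functions on `M`). -/
def coordRing : Set (↥D.M → F) :=
  { f | ∃ (i : D.ι) (φ : Module.Dual F (D.V i)) (v : D.V i), φ ∈ D.du i ∧ f = D.matCoef i φ v }

/-- The Lie algebra `Lie(M)` of the Tannaka monoid. -/
def LieM : Set (∀ i, Module.End F (D.V i)) :=
  { x | x ∈ D.NatAlg ∧
        (∀ (i j k : D.ι) (e : D.V k ≃ₗ[F] (D.V i ⊗[F] D.V j)), D.IsTensorProd i j k e →
          e.toLinearMap ∘ₗ x k =
            (TensorProduct.map (x i) LinearMap.id +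
              TensorProduct.map LinearMap.id (x j)) ∘ₗ e.toLinearMap) ∧
        (∀ i, D.IsTrivOneDim i → x i = 0) ∧
        (∃ δ : (↥D.M → F) → F, ∀ (i : D.ι) (φ : Module.Dual F (D.V i)) (v : D.V i),
          φ ∈ D.du i → δ (D.matCoef i φ v) = φ (x i v)) }

/-- The Lie algebra `Lie(N)` of a submonoid `N ⊆ M`: those `x ∈ Lie(M)` whose derivation
`δ_x` annihilates the vanishing ideal `I(N) ⊆ F[M]`. -/
def LieOf (N : Set (↥D.M)) : Set (∀ i, Module.End F (D.V i)) :=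
  { x | x ∈ D.LieM ∧ ∀ (i : D.ι) (φ : Module.Dual F (D.V i)) (v : D.V i), φ ∈ D.du i →
      (∀ n ∈ N, D.matCoef i φ v n = 0) → φ (x i v) = 0 }

/-- The unit group `M^×` of the Tannaka monoid, as a subset of `M`. -/
def unitsSet : Set (↥D.M) :=
  { m | ∃ n : ↥D.M, m.1 * n.1 = 1 ∧ n.1 * m.1 = 1 }

/-- The pair `C`, `C^du` is good for integrating `g`: `g ⊆ Lie(M)`. -/
def Good : Prop := ∀ x : g, (fun i => (D.ρ i x : Module.End F (D.V i))) ∈ D.LieM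

/-- The pair `C`, `C^du` is very good for integrating `g`: `g ⊆ Lie(M^×)`. -/
def VeryGood : Prop :=
  ∀ x : g, (fun i => (D.ρ i x : Module.End F (D.V i))) ∈ D.LieOf D.unitsSet

/-- A subset `S ⊆ M` is Zariski dense in `M`. -/
def DenseIn (S : Set (↥D.M)) : Prop :=
  ∀ f ∈ D.coordRing, (∀ m ∈ S, f m = 0) → ∀ m, f m = 0

theorem one_mem_M : (1 : ∀ i, Module.End F (D.V i)) ∈ D.M := by
  refine ⟨⟨?_, ?_⟩, ?_, ?_⟩
  · intro i φ hφ
    change LinearMap.dualMap LinearMap.id φ ∈ _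
    rw [LinearMap.dualMap_id]
    exact hφ
  · intro i j f _
    ext v
    simp
  · intro i j k e _
    ext v
    simp [TensorProduct.map_one]
  · intro i _
    rfl

/-- The unit of the Tannaka monoid as an element of the subtype `↥M`. -/
def oneM : ↥D.M := ⟨1, D.one_mem_M⟩

end TannakaSetting

open TensorProduct

variable {F : Type u} [Field F] [CharZero F] {g : Type v} [LieRing g] [LieAlgebra F g]

namespace TannakaAux

open TannakaSetting

variable {F : Type u} [Field F] {g : Type v} [LieRing g] [LieAlgebra F g]

lemma sepV {V : Type w} [AddCommGroup V] [Module F V] {a b : V}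
    (h : ∀ φ : Module.Dual F V, φ a = φ b) : a = b := by
  rw [← sub_eq_zero, ← Module.forall_dual_apply_eq_zero_iff F]
  intro φ; rw [map_sub, h φ, sub_self]

lemma sepT {V W : Type w} [AddCommGroup V] [Module F V] [AddCommGroup W] [Module F W]
    [FiniteDimensional F V] [FiniteDimensional F W] {a b : V ⊗[F] W}
    (h : ∀ (φ : Module.Dual F V) (ψ : Module.Dual F W),
      TensorProduct.dualDistrib F V W (φ ⊗ₜ ψ) a = TensorProduct.dualDistrib F V W (φ ⊗ₜ ψ) b) :
    a = b := by
  rw [← sub_eq_zero, ← Module.forall_dual_apply_eq_zero_iff F]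
  intro ξ
  obtain ⟨s, rfl⟩ := (TensorProduct.dualDistribEquivOfBasis (Module.finBasis F V)
    (Module.finBasis F W)).surjective ξ
  rw [show ((TensorProduct.dualDistribEquivOfBasis (Module.finBasis F V)
    (Module.finBasis F W)) s) = TensorProduct.dualDistrib F V W s from rfl]
  induction s using TensorProduct.induction_on with
  | zero => simp
  | tmul φ ψ => rw [map_sub, h φ ψ, sub_self]
  | add s t hs ht => rw [map_add, LinearMap.add_apply, hs, ht, add_zero]

variable (D : TannakaSetting F g)

lemma matCoef_apply (i : D.ι) (φ : Module.Dual F (D.V i)) (v : D.V i) (n : ↥D.M) :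
    D.matCoef i φ v n = φ (n.1 i v) := rfl

lemma mem_coord (hfull : ∀ i, D.du i = ⊤) (i : D.ι) (φ : Module.Dual F (D.V i)) (v : D.V i) :
    D.matCoef i φ v ∈ D.coordRing :=
  ⟨i, φ, v, by rw [hfull]; trivial, rfl⟩

lemma mul_mem_coord (hfull : ∀ i, D.du i = ⊤) (HG : D.IsGoodSetting) {i j : D.ι} (φ : Module.Dual F (D.V i)) (ψ : Module.Dual F (D.V j))
    (u : D.V i) (w : D.V j) : D.matCoef i φ u * D.matCoef j ψ w ∈ D.coordRing := by
  obtain ⟨k, e, he⟩ := HG.exists_tensor i j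
  refine ⟨k, e.toLinearMap.dualMap (D.tensorDual φ ψ), e.symm (u ⊗ₜ w),
    by rw [hfull]; trivial, ?_⟩
  funext n
  have hn : e.toLinearMap ∘ₗ n.1 k = TensorProduct.map (n.1 i) (n.1 j) ∘ₗ e.toLinearMap :=
    n.2.2.1 i j k e he
  have hn' : e (n.1 k (e.symm (u ⊗ₜ w)))
      = TensorProduct.map (n.1 i) (n.1 j) (e (e.symm (u ⊗ₜ w))) :=
    congrArg (fun f => f (e.symm (u ⊗ₜ w))) hn
  show D.matCoef i φ u n * D.matCoef j ψ w n = _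
  simp only [matCoef_apply, LinearMap.dualMap_apply, LinearEquiv.coe_coe, hn',
    LinearEquiv.apply_symm_apply, TensorProduct.map_tmul]
  show _ = D.tensorDual φ ψ ((n.1 i) u ⊗ₜ (n.1 j) w)
  rw [TannakaSetting.tensorDual, TensorProduct.dualDistrib_apply]

lemma add_mem_coord (hfull : ∀ i, D.du i = ⊤) (HG : D.IsGoodSetting) {i j : D.ι} (φ : Module.Dual F (D.V i)) (ψ : Module.Dual F (D.V j))
    (u : D.V i) (w : D.V j) : D.matCoef i φ u + D.matCoef j ψ w ∈ D.coordRing := by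
  obtain ⟨k, e, he⟩ := HG.exists_sum i j
  refine ⟨k, e.toLinearMap.dualMap
      ((LinearMap.fst F (D.V i) (D.V j)).dualMap φ +
        (LinearMap.snd F (D.V i) (D.V j)).dualMap ψ), e.symm (u, w),
    by rw [hfull]; trivial, ?_⟩
  funext n
  have hfst : D.IsHom ((LinearMap.fst F (D.V i) (D.V j)) ∘ₗ e.toLinearMap) := by
    intro x
    ext v
    have := congrArg (fun f => f v) (he x)
    simp only [LinearMap.comp_apply, LinearEquiv.coe_coe, LinearMap.prodMap_apply,
      LinearMap.fst_apply, LinearMap.snd_apply] at this ⊢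
    rw [this]
  have hsnd : D.IsHom ((LinearMap.snd F (D.V i) (D.V j)) ∘ₗ e.toLinearMap) := by
    intro x
    ext v
    have := congrArg (fun f => f v) (he x)
    simp only [LinearMap.comp_apply, LinearEquiv.coe_coe, LinearMap.prodMap_apply,
      LinearMap.fst_apply, LinearMap.snd_apply] at this ⊢
    rw [this]
  have h1 : (e (n.1 k (e.symm (u, w)))).1 = n.1 i u := by
    have := congrArg (fun f => f (e.symm (u, w))) (n.2.1.2 k i _ hfst)
    simp only [LinearMap.comp_apply, LinearEquiv.coe_coe, LinearMap.fst_apply,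
      LinearEquiv.apply_symm_apply] at this
    exact this
  have h2 : (e (n.1 k (e.symm (u, w)))).2 = n.1 j w := by
    have := congrArg (fun f => f (e.symm (u, w))) (n.2.1.2 k j _ hsnd)
    simp only [LinearMap.comp_apply, LinearEquiv.coe_coe, LinearMap.snd_apply,
      LinearEquiv.apply_symm_apply] at this
    exact this
  show D.matCoef i φ u n + D.matCoef j ψ w n = _
  simp only [matCoef_apply, LinearMap.dualMap_apply, LinearEquiv.coe_coe, LinearMap.add_apply,
    LinearMap.fst_apply, LinearMap.snd_apply, h1, h2]

lemma zero_mem_coord (hfull : ∀ i, D.du i = ⊤) (HG : D.IsGoodSetting) : (0 : ↥D.M → F) ∈ D.coordRing := by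
  obtain ⟨i, _⟩ := HG.exists_triv
  exact ⟨i, 0, 0, by rw [hfull]; trivial, by funext n; simp [matCoef_apply]⟩

lemma smul_coord (i : D.ι) (φ : Module.Dual F (D.V i)) (v : D.V i) (c : F) :
    c • D.matCoef i φ v = D.matCoef i (c • φ) v := by
  funext n
  simp [matCoef_apply]

lemma coord_add (hfull : ∀ i, D.du i = ⊤) (HG : D.IsGoodSetting) {f h : ↥D.M → F} (hf : f ∈ D.coordRing) (hh : h ∈ D.coordRing) :
    f + h ∈ D.coordRing := by
  obtain ⟨i, φ, u, _, rfl⟩ := hf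
  obtain ⟨j, ψ, w, _, rfl⟩ := hh
  exact add_mem_coord D hfull HG φ ψ u w

lemma coord_mul (hfull : ∀ i, D.du i = ⊤) (HG : D.IsGoodSetting) {f h : ↥D.M → F} (hf : f ∈ D.coordRing) (hh : h ∈ D.coordRing) :
    f * h ∈ D.coordRing := by
  obtain ⟨i, φ, u, _, rfl⟩ := hf
  obtain ⟨j, ψ, w, _, rfl⟩ := hh
  exact mul_mem_coord D hfull HG φ ψ u w

lemma one_mem_coord (hfull : ∀ i, D.du i = ⊤) (HG : D.IsGoodSetting) : (1 : ↥D.M → F) ∈ D.coordRing := by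
  obtain ⟨i, hi⟩ := HG.exists_triv
  have : Nontrivial (D.V i) :=
    Module.nontrivial_of_finrank_pos (R := F) (by rw [hi.1]; norm_num)
  obtain ⟨v, hv⟩ := exists_ne (0 : D.V i)
  have : ∃ φ : Module.Dual F (D.V i), φ v ≠ 0 := by
    by_contra hcon
    push_neg at hcon
    exact hv ((Module.forall_dual_apply_eq_zero_iff F v).mp hcon)
  obtain ⟨φ, hφ⟩ := this
  refine ⟨i, (φ v)⁻¹ • φ, v, by rw [hfull]; trivial, ?_⟩
  funext n
  have hni : n.1 i = 1 := n.2.2.2 i hi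
  simp [matCoef_apply, hni, inv_mul_cancel₀ hφ]

lemma matCoef_oneM (i : D.ι) (φ : Module.Dual F (D.V i)) (v : D.V i) :
    D.matCoef i φ v D.oneM = φ v := rfl

lemma matCoef_triv {i : D.ι} (hi : D.IsTrivOneDim i) (φ : Module.Dual F (D.V i)) (v : D.V i) :
    D.matCoef i φ v = φ v • (1 : ↥D.M → F) := by
  funext n
  have hni : n.1 i = 1 := n.2.2.2 i hi
  simp [matCoef_apply, hni]

end TannakaAux

section Build

variable {F : Type u} [Field F] {g : Type v} [LieRing g] [LieAlgebra F g]
variable (D : TannakaSetting F g) (hfull : ∀ i, D.du i = ⊤)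
variable (hfd : ∀ i, FiniteDimensional F (D.V i))
variable (T : (↥D.M → F) → F)
variable (hadd : ∀ f ∈ D.coordRing, ∀ h ∈ D.coordRing, T (f + h) = T f + T h)
variable (hsmul : ∀ f ∈ D.coordRing, ∀ c : F, T (c • f) = c * T f)

namespace TannakaAux

set_option linter.unusedSectionVars false
set_option linter.unusedVariables false

include hfull hfd hadd hsmul

noncomputable def buildL (i : D.ι) (v : D.V i) :
    Module.Dual F (Module.Dual F (D.V i)) where
  toFun φ := T (D.matCoef i φ v)
  map_add' φ ψ := by
    show T (D.matCoef i (φ + ψ) v) = T (D.matCoef i φ v) + T (D.matCoef i ψ v)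
    have h : D.matCoef i (φ + ψ) v = D.matCoef i φ v + D.matCoef i ψ v := by
      funext n; simp [matCoef_apply]
    rw [h, hadd _ (mem_coord D hfull i φ v) _ (mem_coord D hfull i ψ v)]
  map_smul' c φ := by
    show T (D.matCoef i (c • φ) v) = c • T (D.matCoef i φ v)
    have h : D.matCoef i (c • φ) v = c • D.matCoef i φ v := (smul_coord D i φ v c).symm
    rw [h, hsmul _ (mem_coord D hfull i φ v) c]; rfl

noncomputable def build (i : D.ι) : Module.End F (D.V i) :=
  letI := hfd i
  { toFun := fun v => (Module.evalEquiv F (D.V i)).symm (buildL D hfull T hadd hsmul i v)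
    map_add' := fun v w => by
      have h : buildL D hfull T hadd hsmul i (v + w)
          = buildL D hfull T hadd hsmul i v + buildL D hfull T hadd hsmul i w := by
        apply LinearMap.ext; intro φ
        rw [LinearMap.add_apply]
        show T (D.matCoef i φ (v + w)) = T (D.matCoef i φ v) + T (D.matCoef i φ w)
        have h : D.matCoef i φ (v + w) = D.matCoef i φ v + D.matCoef i φ w := by
          funext n; simp [matCoef_apply]
        rw [h, hadd _ (mem_coord D hfull i φ v) _ (mem_coord D hfull i φ w)]
      show (Module.evalEquiv F (D.V i)).symm _ = _
      rw [h, map_add]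
    map_smul' := fun c v => by
      have h : buildL D hfull T hadd hsmul i (c • v)
          = c • buildL D hfull T hadd hsmul i v := by
        apply LinearMap.ext; intro φ
        rw [LinearMap.smul_apply]
        show T (D.matCoef i φ (c • v)) = c • T (D.matCoef i φ v)
        have h : D.matCoef i φ (c • v) = c • D.matCoef i φ v := by
          funext n; simp [matCoef_apply]
        rw [h, hsmul _ (mem_coord D hfull i φ v) c]; rfl
      show (Module.evalEquiv F (D.V i)).symm _ = _
      rw [RingHom.id_apply, h]
      exact map_smul _ c _ }

lemma build_apply (i : D.ι) (φ : Module.Dual F (D.V i)) (v : D.V i) :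
    φ (build D hfull hfd T hadd hsmul i v) = T (D.matCoef i φ v) := by
  letI := hfd i
  exact Module.apply_evalEquiv_symm_apply F (D.V i) φ (buildL D hfull T hadd hsmul i v)

lemma T_zero (HG : D.IsGoodSetting) : T 0 = 0 := by
  have h := hsmul 0 (zero_mem_coord D hfull HG) 0
  simpa using h

lemma build_mem_natAlg (HG : D.IsGoodSetting) :
    (fun i => build D hfull hfd T hadd hsmul i) ∈ D.NatAlg := by
  constructor
  · intro i φ _; rw [hfull]; trivial
  · intro i j f hf
    ext v
    simp only [LinearMap.comp_apply]
    refine sepV (F := F) fun ψ => ?_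
    have h1 : ψ (f (build D hfull hfd T hadd hsmul i v))
        = (f.dualMap ψ) (build D hfull hfd T hadd hsmul i v) := rfl
    rw [h1, build_apply, build_apply]
    congr 1
    funext n
    have hn := congrArg (fun F => F v) (n.2.1.2 i j f hf)
    simp only [LinearMap.comp_apply] at hn
    simp only [matCoef_apply, LinearMap.dualMap_apply, hn]

lemma tensor_fun_eq (i j k : D.ι) (e : D.V k ≃ₗ[F] (D.V i ⊗[F] D.V j))
    (he : D.IsTensorProd i j k e) (w : D.V k)
    (φ : Module.Dual F (D.V i)) (ψ : Module.Dual F (D.V j)) :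
    D.matCoef k (e.toLinearMap.dualMap (D.tensorDual φ ψ)) w
      = fun n : ↥D.M => TensorProduct.dualDistrib F (D.V i) (D.V j) (φ ⊗ₜ ψ)
          (TensorProduct.map (n.1 i) (n.1 j) (e w)) := by
  funext n
  have hn := congrArg (fun f => f w) (n.2.2.1 i j k e he)
  simp only [LinearMap.comp_apply, LinearEquiv.coe_coe] at hn
  simp only [matCoef_apply, LinearMap.dualMap_apply, LinearEquiv.coe_coe, hn]
  rfl

lemma tensor_fun_mem (HG : D.IsGoodSetting) (i j : D.ι)
    (φ : Module.Dual F (D.V i)) (ψ : Module.Dual F (D.V j)) (t : D.V i ⊗[F] D.V j) :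
    (fun n : ↥D.M => TensorProduct.dualDistrib F (D.V i) (D.V j) (φ ⊗ₜ ψ)
        (TensorProduct.map (n.1 i) (n.1 j) t)) ∈ D.coordRing := by
  induction t using TensorProduct.induction_on with
  | zero =>
      have h : (fun n : ↥D.M => TensorProduct.dualDistrib F (D.V i) (D.V j) (φ ⊗ₜ ψ)
          (TensorProduct.map (n.1 i) (n.1 j) (0 : D.V i ⊗[F] D.V j))) = 0 := by
        funext n; simp
      rw [h]; exact zero_mem_coord D hfull HG
  | tmul u w =>
      have h : (fun n : ↥D.M => TensorProduct.dualDistrib F (D.V i) (D.V j) (φ ⊗ₜ ψ)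
          (TensorProduct.map (n.1 i) (n.1 j) (u ⊗ₜ w))) = D.matCoef i φ u * D.matCoef j ψ w := by
        funext n
        simp [matCoef_apply, TensorProduct.map_tmul, TensorProduct.dualDistrib_apply]
      rw [h]; exact mul_mem_coord D hfull HG φ ψ u w
  | add a b ha hb =>
      have h : (fun n : ↥D.M => TensorProduct.dualDistrib F (D.V i) (D.V j) (φ ⊗ₜ ψ)
          (TensorProduct.map (n.1 i) (n.1 j) (a + b)))
          = (fun n : ↥D.M => TensorProduct.dualDistrib F (D.V i) (D.V j) (φ ⊗ₜ ψ)
              (TensorProduct.map (n.1 i) (n.1 j) a))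
            + (fun n : ↥D.M => TensorProduct.dualDistrib F (D.V i) (D.V j) (φ ⊗ₜ ψ)
              (TensorProduct.map (n.1 i) (n.1 j) b)) := by
        funext n; simp
      rw [h]; exact coord_add D hfull HG ha hb

lemma build_mul_val (HG : D.IsGoodSetting)
    (hmul : ∀ f ∈ D.coordRing, ∀ h ∈ D.coordRing, T (f * h) = T f * T h)
    (i j : D.ι) (φ : Module.Dual F (D.V i)) (ψ : Module.Dual F (D.V j))
    (t : D.V i ⊗[F] D.V j) :
    T (fun n : ↥D.M => TensorProduct.dualDistrib F (D.V i) (D.V j) (φ ⊗ₜ ψ)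
        (TensorProduct.map (n.1 i) (n.1 j) t))
      = TensorProduct.dualDistrib F (D.V i) (D.V j) (φ ⊗ₜ ψ)
          (TensorProduct.map (build D hfull hfd T hadd hsmul i)
            (build D hfull hfd T hadd hsmul j) t) := by
  induction t using TensorProduct.induction_on with
  | zero =>
      have h : (fun n : ↥D.M => TensorProduct.dualDistrib F (D.V i) (D.V j) (φ ⊗ₜ ψ)
          (TensorProduct.map (n.1 i) (n.1 j) (0 : D.V i ⊗[F] D.V j))) = 0 := by
        funext n; simp
      rw [h, T_zero D hfull hfd T hadd hsmul HG]; simp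
  | tmul u w =>
      have h : (fun n : ↥D.M => TensorProduct.dualDistrib F (D.V i) (D.V j) (φ ⊗ₜ ψ)
          (TensorProduct.map (n.1 i) (n.1 j) (u ⊗ₜ w))) = D.matCoef i φ u * D.matCoef j ψ w := by
        funext n
        simp [matCoef_apply, TensorProduct.map_tmul, TensorProduct.dualDistrib_apply]
      rw [h, hmul _ (mem_coord D hfull i φ u) _ (mem_coord D hfull j ψ w),
        TensorProduct.map_tmul, TensorProduct.dualDistrib_apply,
        build_apply D hfull hfd T hadd hsmul i φ u, build_apply D hfull hfd T hadd hsmul j ψ w]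
  | add a b ha hb =>
      have h : (fun n : ↥D.M => TensorProduct.dualDistrib F (D.V i) (D.V j) (φ ⊗ₜ ψ)
          (TensorProduct.map (n.1 i) (n.1 j) (a + b)))
          = (fun n : ↥D.M => TensorProduct.dualDistrib F (D.V i) (D.V j) (φ ⊗ₜ ψ)
              (TensorProduct.map (n.1 i) (n.1 j) a))
            + (fun n : ↥D.M => TensorProduct.dualDistrib F (D.V i) (D.V j) (φ ⊗ₜ ψ)
              (TensorProduct.map (n.1 i) (n.1 j) b)) := by
        funext n; simp
      rw [h, hadd _ (tensor_fun_mem D hfull hfd T hadd hsmul HG i j φ ψ a)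
        _ (tensor_fun_mem D hfull hfd T hadd hsmul HG i j φ ψ b), ha, hb]
      simp

lemma build_der_val (HG : D.IsGoodSetting)
    (hder : ∀ f ∈ D.coordRing, ∀ h ∈ D.coordRing,
      T (f * h) = T f * h D.oneM + f D.oneM * T h)
    (i j : D.ι) (φ : Module.Dual F (D.V i)) (ψ : Module.Dual F (D.V j))
    (t : D.V i ⊗[F] D.V j) :
    T (fun n : ↥D.M => TensorProduct.dualDistrib F (D.V i) (D.V j) (φ ⊗ₜ ψ)
        (TensorProduct.map (n.1 i) (n.1 j) t))
      = TensorProduct.dualDistrib F (D.V i) (D.V j) (φ ⊗ₜ ψ)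
          (TensorProduct.map (build D hfull hfd T hadd hsmul i)
            (LinearMap.id : D.V j →ₗ[F] D.V j) t)
        + TensorProduct.dualDistrib F (D.V i) (D.V j) (φ ⊗ₜ ψ)
          (TensorProduct.map (LinearMap.id : D.V i →ₗ[F] D.V i)
            (build D hfull hfd T hadd hsmul j) t) := by
  induction t using TensorProduct.induction_on with
  | zero =>
      have h : (fun n : ↥D.M => TensorProduct.dualDistrib F (D.V i) (D.V j) (φ ⊗ₜ ψ)
          (TensorProduct.map (n.1 i) (n.1 j) (0 : D.V i ⊗[F] D.V j))) = 0 := by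
        funext n; simp
      rw [h, T_zero D hfull hfd T hadd hsmul HG]; simp
  | tmul u w =>
      have h : (fun n : ↥D.M => TensorProduct.dualDistrib F (D.V i) (D.V j) (φ ⊗ₜ ψ)
          (TensorProduct.map (n.1 i) (n.1 j) (u ⊗ₜ w))) = D.matCoef i φ u * D.matCoef j ψ w := by
        funext n
        simp [matCoef_apply, TensorProduct.map_tmul, TensorProduct.dualDistrib_apply]
      rw [h, hder _ (mem_coord D hfull i φ u) _ (mem_coord D hfull j ψ w),
        matCoef_oneM, matCoef_oneM]
      simp only [TensorProduct.map_tmul, TensorProduct.dualDistrib_apply, LinearMap.id_apply]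
      rw [build_apply D hfull hfd T hadd hsmul i φ u, build_apply D hfull hfd T hadd hsmul j ψ w]
  | add a b ha hb =>
      have h : (fun n : ↥D.M => TensorProduct.dualDistrib F (D.V i) (D.V j) (φ ⊗ₜ ψ)
          (TensorProduct.map (n.1 i) (n.1 j) (a + b)))
          = (fun n : ↥D.M => TensorProduct.dualDistrib F (D.V i) (D.V j) (φ ⊗ₜ ψ)
              (TensorProduct.map (n.1 i) (n.1 j) a))
            + (fun n : ↥D.M => TensorProduct.dualDistrib F (D.V i) (D.V j) (φ ⊗ₜ ψ)
              (TensorProduct.map (n.1 i) (n.1 j) b)) := by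
        funext n; simp
      rw [h, hadd _ (tensor_fun_mem D hfull hfd T hadd hsmul HG i j φ ψ a)
        _ (tensor_fun_mem D hfull hfd T hadd hsmul HG i j φ ψ b), ha, hb]
      simp only [map_add]
      ring

lemma build_tensor_M (HG : D.IsGoodSetting)
    (hmul : ∀ f ∈ D.coordRing, ∀ h ∈ D.coordRing, T (f * h) = T f * T h)
    (i j k : D.ι) (e : D.V k ≃ₗ[F] (D.V i ⊗[F] D.V j)) (he : D.IsTensorProd i j k e) :
    e.toLinearMap ∘ₗ build D hfull hfd T hadd hsmul k
      = TensorProduct.map (build D hfull hfd T hadd hsmul i)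
          (build D hfull hfd T hadd hsmul j) ∘ₗ e.toLinearMap := by
  apply LinearMap.ext; intro w
  letI := hfd i; letI := hfd j
  simp only [LinearMap.comp_apply, LinearEquiv.coe_coe]
  refine sepT (F := F) fun φ ψ => ?_
  calc TensorProduct.dualDistrib F (D.V i) (D.V j) (φ ⊗ₜ ψ)
        (e (build D hfull hfd T hadd hsmul k w))
      = (e.toLinearMap.dualMap (D.tensorDual φ ψ)) (build D hfull hfd T hadd hsmul k w) := rfl
    _ = T (D.matCoef k (e.toLinearMap.dualMap (D.tensorDual φ ψ)) w) := build_apply _ _ _ _ _ _ _ _ _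
    _ = T (fun n : ↥D.M => TensorProduct.dualDistrib F (D.V i) (D.V j) (φ ⊗ₜ ψ)
          (TensorProduct.map (n.1 i) (n.1 j) (e w))) := by
        rw [tensor_fun_eq D hfull hfd T hadd hsmul i j k e he w φ ψ]
    _ = _ := build_mul_val D hfull hfd T hadd hsmul HG hmul i j φ ψ (e w)

lemma build_tensor_Lie (HG : D.IsGoodSetting)
    (hder : ∀ f ∈ D.coordRing, ∀ h ∈ D.coordRing,
      T (f * h) = T f * h D.oneM + f D.oneM * T h)
    (i j k : D.ι) (e : D.V k ≃ₗ[F] (D.V i ⊗[F] D.V j)) (he : D.IsTensorProd i j k e) :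
    e.toLinearMap ∘ₗ build D hfull hfd T hadd hsmul k
      = (TensorProduct.map (build D hfull hfd T hadd hsmul i) LinearMap.id
          + TensorProduct.map LinearMap.id (build D hfull hfd T hadd hsmul j))
        ∘ₗ e.toLinearMap := by
  apply LinearMap.ext; intro w
  letI := hfd i; letI := hfd j
  simp only [LinearMap.comp_apply, LinearEquiv.coe_coe]
  refine sepT (F := F) fun φ ψ => ?_
  calc TensorProduct.dualDistrib F (D.V i) (D.V j) (φ ⊗ₜ ψ)
        (e (build D hfull hfd T hadd hsmul k w))
      = (e.toLinearMap.dualMap (D.tensorDual φ ψ)) (build D hfull hfd T hadd hsmul k w) := rfl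
    _ = T (D.matCoef k (e.toLinearMap.dualMap (D.tensorDual φ ψ)) w) := build_apply _ _ _ _ _ _ _ _ _
    _ = T (fun n : ↥D.M => TensorProduct.dualDistrib F (D.V i) (D.V j) (φ ⊗ₜ ψ)
          (TensorProduct.map (n.1 i) (n.1 j) (e w))) := by
        rw [tensor_fun_eq D hfull hfd T hadd hsmul i j k e he w φ ψ]
    _ = _ := by
        rw [build_der_val D hfull hfd T hadd hsmul HG hder i j φ ψ (e w)]
        rw [LinearMap.add_apply, map_add]

lemma build_triv_M (HG : D.IsGoodSetting) (hone : T 1 = 1)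
    (i : D.ι) (hi : D.IsTrivOneDim i) : build D hfull hfd T hadd hsmul i = 1 := by
  apply LinearMap.ext; intro v
  refine sepV (F := F) fun φ => ?_
  rw [build_apply, matCoef_triv D hi φ v,
    hsmul 1 (one_mem_coord D hfull HG) (φ v), hone, mul_one]
  rfl

lemma T_one_zero (HG : D.IsGoodSetting)
    (hder : ∀ f ∈ D.coordRing, ∀ h ∈ D.coordRing,
      T (f * h) = T f * h D.oneM + f D.oneM * T h) : T 1 = 0 := by
  have h := hder 1 (one_mem_coord D hfull HG) 1 (one_mem_coord D hfull HG)
  rw [mul_one] at h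
  have h1 : (1 : ↥D.M → F) D.oneM = 1 := rfl
  rw [h1, mul_one, one_mul] at h
  exact left_eq_add.mp h

lemma build_triv_Lie (HG : D.IsGoodSetting)
    (hder : ∀ f ∈ D.coordRing, ∀ h ∈ D.coordRing,
      T (f * h) = T f * h D.oneM + f D.oneM * T h)
    (i : D.ι) (hi : D.IsTrivOneDim i) : build D hfull hfd T hadd hsmul i = 0 := by
  apply LinearMap.ext; intro v
  refine sepV (F := F) fun φ => ?_
  rw [build_apply, matCoef_triv D hi φ v,
    hsmul 1 (one_mem_coord D hfull HG) (φ v),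
    T_one_zero D hfull hfd T hadd hsmul HG hder, mul_zero]
  simp

end TannakaAux

end Build

/-- **The classical case: all modules finite dimensional, full duals.**
Suppose every `g`-module contained in `C` is finite dimensional and `C^du` is the category
of full duals.  Then: (a) the multiplication of `M` admits a comorphism, making `F[M]` a
bialgebra (with counit the evaluation at `1 ∈ M`); (b) evaluation identifies `M` with the set
`Specm F[M]` of `F`-algebra homomorphisms `F[M] → F`; (c) `x ↦ δ_x` identifies `Lie(M)` with
the space `Der_1(F[M])` of point derivations at `1 ∈ M`. -/
theorem stmt_12 (D : TannakaSetting F g) (HG : D.IsGoodSetting)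
    (hfd : ∀ i, FiniteDimensional F (D.V i))
    (hfull : ∀ i, D.du i = ⊤) :
    -- (a) the comorphism of the multiplication map exists:
    (∀ f ∈ D.coordRing, ∃ (N : ℕ) (gs hs : Fin N → (↥D.M → F)),
      (∀ k, gs k ∈ D.coordRing ∧ hs k ∈ D.coordRing) ∧
      ∀ (m m' : ↥D.M) (hmm : m.1 * m'.1 ∈ D.M),
        f ⟨m.1 * m'.1, hmm⟩ = ∑ k, gs k m * hs k m') ∧
    -- (b) `M` identifies with `Specm F[M]`:
    ((∀ α : (↥D.M → F) → F,
        (∀ f ∈ D.coordRing, ∀ h ∈ D.coordRing, α (f + h) = α f + α h) →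
        (∀ f ∈ D.coordRing, ∀ c : F, α (c • f) = c * α f) →
        (∀ f ∈ D.coordRing, ∀ h ∈ D.coordRing, α (f * h) = α f * α h) →
        α 1 = 1 →
        ∃ m : ↥D.M, ∀ f ∈ D.coordRing, α f = f m) ∧
      (∀ m m' : ↥D.M, (∀ f ∈ D.coordRing, f m = f m') → m = m')) ∧
    -- (c) `Lie(M)` identifies with `Der_1(F[M])`:
    ((∀ δ : (↥D.M → F) → F,
        (∀ f ∈ D.coordRing, ∀ h ∈ D.coordRing, δ (f + h) = δ f + δ h) →
        (∀ f ∈ D.coordRing, ∀ c : F, δ (c • f) = c * δ f) →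
        (∀ f ∈ D.coordRing, ∀ h ∈ D.coordRing,
          δ (f * h) = δ f * h D.oneM + f D.oneM * δ h) →
        ∃ x ∈ D.LieM, ∀ (i : D.ι) (φ : Module.Dual F (D.V i)) (v : D.V i), φ ∈ D.du i →
          δ (D.matCoef i φ v) = φ (x i v)) ∧
      (∀ x ∈ D.LieM, ∀ y ∈ D.LieM,
        (∀ (i : D.ι) (φ : Module.Dual F (D.V i)) (v : D.V i), φ ∈ D.du i →
          φ (x i v) = φ (y i v)) → x = y)) := by
  classical
  refine ⟨?_, ⟨?_, ?_⟩, ?_, ?_⟩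
  · -- (a)
    intro f hf
    obtain ⟨i, φ, v, -, rfl⟩ := hf
    letI := hfd i
    set b := Module.finBasis F (D.V i) with hb
    refine ⟨Module.finrank F (D.V i), fun k => D.matCoef i φ (b k),
      fun k => D.matCoef i (b.coord k) v, fun k =>
        ⟨TannakaAux.mem_coord D hfull i _ _, TannakaAux.mem_coord D hfull i _ _⟩, ?_⟩
    intro m m' hmm
    have e1 : D.matCoef i φ v ⟨m.1 * m'.1, hmm⟩ = φ ((m.1 i) ((m'.1 i) v)) := rfl
    rw [e1]
    conv_lhs => rw [← Module.Basis.sum_repr b ((m'.1 i) v)]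
    rw [map_sum, map_sum]
    refine Finset.sum_congr rfl fun k _ => ?_
    rw [map_smul, map_smul, smul_eq_mul]
    show _ = D.matCoef i φ (b k) m * D.matCoef i (b.coord k) v m'
    rw [TannakaAux.matCoef_apply, TannakaAux.matCoef_apply, Module.Basis.coord_apply, mul_comm]
  · -- (b) surjectivity
    intro α hadd hsmul hmul hone
    have hmem : (fun i => TannakaAux.build D hfull hfd α hadd hsmul i) ∈ D.M := by
      refine ⟨TannakaAux.build_mem_natAlg D hfull hfd α hadd hsmul HG, ?_, ?_⟩
      · intro i j k e he
        exact TannakaAux.build_tensor_M D hfull hfd α hadd hsmul HG hmul i j k e he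
      · intro i hi
        exact TannakaAux.build_triv_M D hfull hfd α hadd hsmul HG hone i hi
    refine ⟨⟨_, hmem⟩, ?_⟩
    intro f hf
    obtain ⟨i, φ, v, -, rfl⟩ := hf
    exact (TannakaAux.build_apply D hfull hfd α hadd hsmul i φ v).symm
  · -- (b) injectivity
    intro m m' hagree
    apply Subtype.ext
    funext i
    apply LinearMap.ext; intro v
    refine TannakaAux.sepV (F := F) fun φ => ?_
    exact hagree (D.matCoef i φ v) (TannakaAux.mem_coord D hfull i φ v)
  · -- (c) surjectivity
    intro δ hadd hsmul hder
    refine ⟨fun i => TannakaAux.build D hfull hfd δ hadd hsmul i,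
      ⟨TannakaAux.build_mem_natAlg D hfull hfd δ hadd hsmul HG, ?_, ?_, ?_⟩, ?_⟩
    · intro i j k e he
      exact TannakaAux.build_tensor_Lie D hfull hfd δ hadd hsmul HG hder i j k e he
    · intro i hi
      exact TannakaAux.build_triv_Lie D hfull hfd δ hadd hsmul HG hder i hi
    · exact ⟨δ, fun i φ v _ => (TannakaAux.build_apply D hfull hfd δ hadd hsmul i φ v).symm⟩
    · exact fun i φ v _ => (TannakaAux.build_apply D hfull hfd δ hadd hsmul i φ v).symm
  · -- (c) injectivity
    intro x _ y _ hagree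
    funext i
    apply LinearMap.ext; intro v
    refine TannakaAux.sepV (F := F) fun φ => ?_
    exact hagree i φ v (by rw [hfull]; trivial)
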